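/- Let n, d be positive integers, let X ∈ ℝ^{n×d} be a data matrix whose rows are x_1, …, x_n ∈ ℝ^d, and let ℙ_n = (1/n)∑_{t=1}^n δ_{x_t} be the empirical probability measure on ℝ^d. Fix δ ≥ 0 and B ∈ ℝ^{d×d}. Then for every Borel probability measure ℙ on ℝ^d for which there exists a probability measure π on ℝ^d × ℝ^d with first marginal ℙ, second marginal ℙ_n, and ∫ ‖u − w‖_2^2 dπ(u,w) ≤ δ, one has ∫ ‖x − Bᵀx‖_2^2 dℙ(x) ≤ ( (1/√n)‖X − XB‖_F + √δ ‖I − B‖_2 )^2, where ‖·‖_F is the Frobenius norm and ‖·‖_2 is the spectral (ℓ2 operator) norm of a matrix. -/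

import Mathlib

open MeasureTheory Matrix
open scoped ENNReal

/-- Frobenius norm of a real matrix. -/
noncomputable def frobNorm {m n : ℕ} (M : Matrix (Fin m) (Fin n) ℝ) : ℝ :=
  Real.sqrt (∑ i, ∑ j, (M i j) ^ 2)

/-- Spectral (ℓ2 operator) norm of a real matrix. -/
noncomputable def specNorm {m n : ℕ} (M : Matrix (Fin m) (Fin n) ℝ) : ℝ :=
  ‖(Matrix.toEuclideanLin M).toContinuousLinearMap‖

/-- **Theorem 1 (DRO relaxation).** For every probability measure `P` within transport
cost `δ` (quadratic cost) of the empirical measure `ℙ_n = (1/n)∑ δ_{x_t}`, the expected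
nodewise regression loss `∫ ‖x - Bᵀx‖² dP` is bounded by
`((1/√n)‖X - XB‖_F + √δ ‖I - B‖₂)²`. -/
theorem stmt_0 {n d : ℕ} (hn : 0 < n) (hd : 0 < d)
    (X : Matrix (Fin n) (Fin d) ℝ) (x : Fin n → EuclideanSpace ℝ (Fin d))
    (hX : ∀ t i, X t i = x t i)
    (δ : ℝ) (hδ : 0 ≤ δ) (B : Matrix (Fin d) (Fin d) ℝ)
    (P : Measure (EuclideanSpace ℝ (Fin d))) [IsProbabilityMeasure P]
    (π : Measure (EuclideanSpace ℝ (Fin d) × EuclideanSpace ℝ (Fin d)))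
    [IsProbabilityMeasure π]
    (hfst : π.map Prod.fst = P)
    (hsnd : π.map Prod.snd = (n : ℝ≥0∞)⁻¹ • ∑ t : Fin n, Measure.dirac (x t))
    (hcost : ∫⁻ p, ENNReal.ofReal (‖p.1 - p.2‖ ^ 2) ∂π ≤ ENNReal.ofReal δ) :
    ∫⁻ u, ENNReal.ofReal (‖u - Matrix.toEuclideanLin Bᵀ u‖ ^ 2) ∂P
      ≤ ENNReal.ofReal
          (((1 / Real.sqrt n) * frobNorm (X - X * B)
            + Real.sqrt δ * specNorm ((1 : Matrix (Fin d) (Fin d) ℝ) - B)) ^ 2) := by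
  classical
  set M : Matrix (Fin d) (Fin d) ℝ := (1 : Matrix (Fin d) (Fin d) ℝ) - B with hM
  set L : EuclideanSpace ℝ (Fin d) →ₗ[ℝ] EuclideanSpace ℝ (Fin d) := Matrix.toEuclideanLin Mᵀ with hLdef
  have hLu : ∀ u : EuclideanSpace ℝ (Fin d), u - Matrix.toEuclideanLin Bᵀ u = L u := by
    intro u
    rw [hLdef, hM, Matrix.transpose_sub, map_sub, Matrix.transpose_one]
    simp [Matrix.toEuclideanLin_apply, Matrix.one_mulVec]
  set C : ℝ := specNorm M with hCdef
  have hC0 : 0 ≤ C := norm_nonneg _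
  have hF0 : 0 ≤ frobNorm (X - X * B) := Real.sqrt_nonneg _
  have hLcont : Continuous L := L.continuous_of_finiteDimensional
  have hspec : ‖LinearMap.toContinuousLinearMap L‖ = C := by
    have h1 : Mᵀ = Mᴴ := by ext i j; simp [Matrix.conjTranspose_apply]
    rw [hLdef, h1, Matrix.toEuclideanLin_conjTranspose_eq_adjoint,
      LinearMap.adjoint_toContinuousLinearMap]
    exact ContinuousLinearMap.adjoint.norm_map _
  have hLle : ∀ v : EuclideanSpace ℝ (Fin d), ‖L v‖ ≤ C * ‖v‖ := by
    intro v
    have h := (LinearMap.toContinuousLinearMap L).le_opNorm v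
    rwa [hspec] at h
  set f : EuclideanSpace ℝ (Fin d) × EuclideanSpace ℝ (Fin d) → ℝ≥0∞ := fun p => (‖L p.2‖₊ : ℝ≥0∞) with hfdef
  set g : EuclideanSpace ℝ (Fin d) × EuclideanSpace ℝ (Fin d) → ℝ≥0∞ := fun p => ENNReal.ofReal C * (‖p.1 - p.2‖₊ : ℝ≥0∞) with hgdef
  have hfm : Measurable f :=
    ((hLcont.comp continuous_snd).measurable.nnnorm).coe_nnreal_ennreal
  have hgm : Measurable g :=
    (measurable_const.mul ((continuous_fst.sub continuous_snd).measurable.nnnorm.coe_nnreal_ennreal))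
  -- pointwise bound
  have hpt : ∀ p : EuclideanSpace ℝ (Fin d) × EuclideanSpace ℝ (Fin d), (‖L p.1‖₊ : ℝ≥0∞) ≤ f p + g p := by
    intro p
    have h1 : ‖L p.1‖ ≤ ‖L p.2‖ + C * ‖p.1 - p.2‖ := by
      have he : L p.1 = L p.2 + L (p.1 - p.2) := by rw [map_sub]; abel
      calc ‖L p.1‖ = ‖L p.2 + L (p.1 - p.2)‖ := by rw [he]
        _ ≤ ‖L p.2‖ + ‖L (p.1 - p.2)‖ := norm_add_le _ _
        _ ≤ ‖L p.2‖ + C * ‖p.1 - p.2‖ := add_le_add le_rfl (hLle _)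
    calc (‖L p.1‖₊ : ℝ≥0∞) = ENNReal.ofReal ‖L p.1‖ := (ofReal_norm _).symm
      _ ≤ ENNReal.ofReal (‖L p.2‖ + C * ‖p.1 - p.2‖) := ENNReal.ofReal_le_ofReal h1
      _ = f p + g p := by
          rw [ENNReal.ofReal_add (norm_nonneg _) (by positivity), ENNReal.ofReal_mul hC0]
          simp [hfdef, hgdef, ofReal_norm]; rfl
  -- rewrite the LHS as an integral over π
  have hLHS : ∫⁻ u, ENNReal.ofReal (‖u - Matrix.toEuclideanLin Bᵀ u‖ ^ 2) ∂P
      = ∫⁻ p, (‖L p.1‖₊ : ℝ≥0∞) ^ (2:ℝ) ∂π := by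
    have h1 : ∀ u : EuclideanSpace ℝ (Fin d), ENNReal.ofReal (‖u - Matrix.toEuclideanLin Bᵀ u‖ ^ 2)
        = (‖L u‖₊ : ℝ≥0∞) ^ (2:ℝ) := by
      intro u
      rw [hLu u, ← enorm_eq_nnnorm, ← ofReal_norm,
        ENNReal.ofReal_rpow_of_nonneg (norm_nonneg _) (by norm_num)]
      norm_num
    simp_rw [h1]
    rw [← hfst,
      lintegral_map ((hLcont.measurable.nnnorm.coe_nnreal_ennreal).pow_const _) measurable_fst]
  -- the f-integral
  have hIf : ∫⁻ a, f a ^ (2:ℝ) ∂π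
      = ENNReal.ofReal ((1 / (n:ℝ)) * frobNorm (X - X * B) ^ 2) := by
    have hm : Measurable fun w : EuclideanSpace ℝ (Fin d) => (‖L w‖₊ : ℝ≥0∞) ^ (2:ℝ) :=
      (hLcont.measurable.nnnorm.coe_nnreal_ennreal).pow_const _
    have h0 : ∫⁻ a, f a ^ (2:ℝ) ∂π
        = ∫⁻ w, (‖L w‖₊ : ℝ≥0∞) ^ (2:ℝ) ∂(π.map Prod.snd) := by
      rw [lintegral_map hm measurable_snd]
    have hterm : ∀ t, (‖L (x t)‖₊ : ℝ≥0∞) ^ (2:ℝ)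
        = ENNReal.ofReal (∑ i, ((X - X * B) t i) ^ 2) := by
      intro t
      rw [← enorm_eq_nnnorm, ← ofReal_norm,
        ENNReal.ofReal_rpow_of_nonneg (norm_nonneg _) (by norm_num)]
      congr 1
      have h2 : ‖L (x t)‖ ^ (2:ℝ) = ‖L (x t)‖ ^ (2:ℕ) := by
        rw [← Real.rpow_natCast]; norm_num
      rw [h2, EuclideanSpace.norm_eq, Real.sq_sqrt (by positivity)]
      refine Finset.sum_congr rfl fun i _ => ?_
      have hcomp : L (x t) i = (X - X * B) t i := by
        have h3 : L (x t) i = ∑ j, M j i * x t j := by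
          simp [hLdef, Matrix.toEuclideanLin_apply, Matrix.mulVec, dotProduct,
            Matrix.transpose_apply]
        rw [h3, hM]
        simp only [Matrix.sub_apply, Matrix.one_apply, Matrix.mul_apply, sub_mul,
          Finset.sum_sub_distrib, ite_mul, one_mul, zero_mul]
        rw [Finset.sum_ite_eq' Finset.univ i (x t), if_pos (Finset.mem_univ i), ← hX t i]
        congr 1
        exact Finset.sum_congr rfl fun j _ => by rw [← hX t j, mul_comm]
      rw [hcomp, Real.norm_eq_abs, sq_abs]
    rw [h0, hsnd, lintegral_smul_measure, lintegral_finset_sum_measure]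
    simp_rw [lintegral_dirac, hterm]
    rw [← ENNReal.ofReal_sum_of_nonneg (fun t _ => by positivity)]
    have hninv : ((n : ℝ≥0∞))⁻¹ = ENNReal.ofReal (1/(n:ℝ)) := by
      rw [one_div, ENNReal.ofReal_inv_of_pos (Nat.cast_pos.mpr hn), ENNReal.ofReal_natCast]
    rw [hninv, smul_eq_mul, ← ENNReal.ofReal_mul (by positivity)]
    congr 1
    rw [frobNorm, Real.sq_sqrt (by positivity)]
  -- the g-integral
  have hIg : ∫⁻ a, g a ^ (2:ℝ) ∂π ≤ ENNReal.ofReal C ^ (2:ℝ) * ENNReal.ofReal δ := by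
    have h1 : ∀ a : EuclideanSpace ℝ (Fin d) × EuclideanSpace ℝ (Fin d), g a ^ (2:ℝ)
        = ENNReal.ofReal C ^ (2:ℝ) * ENNReal.ofReal (‖a.1 - a.2‖ ^ 2) := by
      intro a
      rw [hgdef]
      dsimp only
      rw [ENNReal.mul_rpow_of_nonneg _ _ (by norm_num)]
      congr 1
      rw [← enorm_eq_nnnorm, ← ofReal_norm,
        ENNReal.ofReal_rpow_of_nonneg (norm_nonneg _) (by norm_num)]
      norm_num
    simp_rw [h1]
    rw [lintegral_const_mul _ (f := fun a : EuclideanSpace ℝ (Fin d) × EuclideanSpace ℝ (Fin d) => ENNReal.ofReal (‖a.1 - a.2‖ ^ 2))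
      (((continuous_fst.sub continuous_snd).measurable.norm.pow_const 2).ennreal_ofReal)]
    exact mul_le_mul_right hcost _
  have hIf' : (∫⁻ a, f a ^ (2:ℝ) ∂π) ^ (1/2:ℝ)
      = ENNReal.ofReal ((1 / Real.sqrt n) * frobNorm (X - X * B)) := by
    rw [hIf, ENNReal.ofReal_rpow_of_nonneg (by positivity) (by norm_num)]
    congr 1
    rw [← Real.sqrt_eq_rpow, Real.sqrt_mul (by positivity), Real.sqrt_sq hF0,
      one_div, one_div, Real.sqrt_inv]
  have hIg' : (∫⁻ a, g a ^ (2:ℝ) ∂π) ^ (1/2:ℝ)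
      ≤ ENNReal.ofReal (Real.sqrt δ * C) := by
    calc (∫⁻ a, g a ^ (2:ℝ) ∂π) ^ (1/2:ℝ)
        ≤ (ENNReal.ofReal C ^ (2:ℝ) * ENNReal.ofReal δ) ^ (1/2:ℝ) :=
          ENNReal.rpow_le_rpow hIg (by norm_num)
      _ = ENNReal.ofReal (Real.sqrt δ * C) := by
          rw [ENNReal.mul_rpow_of_nonneg _ _ (by norm_num), ← ENNReal.rpow_mul]
          norm_num
          rw [ENNReal.ofReal_rpow_of_nonneg hδ (by norm_num), ← Real.sqrt_eq_rpow,
            ← ENNReal.ofReal_mul hC0, mul_comm]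
          exact ENNReal.ofReal_mul (Real.sqrt_nonneg _)
  -- Minkowski
  have key := ENNReal.lintegral_Lp_add_le (μ := π) hfm.aemeasurable hgm.aemeasurable
    (by norm_num : (1:ℝ) ≤ 2)
  calc ∫⁻ u, ENNReal.ofReal (‖u - Matrix.toEuclideanLin Bᵀ u‖ ^ 2) ∂P
      = ∫⁻ p, (‖L p.1‖₊ : ℝ≥0∞) ^ (2:ℝ) ∂π := hLHS
    _ ≤ ∫⁻ p, ((f + g) p) ^ (2:ℝ) ∂π :=
        lintegral_mono fun p => ENNReal.rpow_le_rpow (hpt p) (by norm_num)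
    _ = ((∫⁻ p, ((f + g) p) ^ (2:ℝ) ∂π) ^ (1/2:ℝ)) ^ (2:ℝ) := by
        rw [← ENNReal.rpow_mul]; norm_num
    _ ≤ ((∫⁻ a, f a ^ (2:ℝ) ∂π) ^ (1/2:ℝ) + (∫⁻ a, g a ^ (2:ℝ) ∂π) ^ (1/2:ℝ)) ^ (2:ℝ) :=
        ENNReal.rpow_le_rpow key (by norm_num)
    _ ≤ (ENNReal.ofReal ((1 / Real.sqrt n) * frobNorm (X - X * B))
          + ENNReal.ofReal (Real.sqrt δ * C)) ^ (2:ℝ) := by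
        refine ENNReal.rpow_le_rpow ?_ (by norm_num)
        exact add_le_add (le_of_eq hIf') hIg'
    _ = ENNReal.ofReal
          (((1 / Real.sqrt n) * frobNorm (X - X * B) + Real.sqrt δ * C) ^ 2) := by
        rw [← ENNReal.ofReal_add (by positivity) (by positivity),
          ENNReal.ofReal_rpow_of_nonneg (by positivity) (by norm_num)]
        norm_num
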